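/- Fix 0 < s < t. The map F(z) = (1/4)[s² - (t-s+√(t²-4z))²] (standard branch of square root) maps ℂ⁺ into ℂ⁺, satisfies F(z̄) = conj(F(z)), Im F(z) ≥ Im z for z ∈ ℂ⁺, and lim_{y→∞} F(iy)/(iy) = 1. -/

import Mathlib

/-- Subordination map F(z) = (1/4)[s² - (t-s+√(t²-4z))²]. -/
noncomputable def Fsub (s t : ℝ) (z : ℂ) : ℂ :=
  (1/4) * ((s:ℂ)^2 - ((t:ℂ) - (s:ℂ) + ((t:ℂ)^2 - 4*z) ^ ((1:ℂ)/2))^2)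

lemma Fsub_eq (s t : ℝ) (z : ℂ) (h : (t:ℂ)^2 - 4*z ≠ 0) :
    Fsub s t z = z - (((t - s)/2 : ℝ) : ℂ) * (((t:ℂ)^2 - 4*z) ^ ((1:ℂ)/2) + t) := by
  have hw : (((t:ℂ)^2 - 4*z) ^ ((1:ℂ)/2))^2 = (t:ℂ)^2 - 4*z := by
    rw [sq, ← Complex.cpow_add _ _ h]; norm_num
  unfold Fsub
  push_cast
  linear_combination (-(1:ℂ)/4) * hw

lemma im_cpow_half_neg {x : ℂ} (hx : x.im < 0) : (x ^ ((1:ℂ)/2)).im < 0 := by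
  have hx0 : x ≠ 0 := fun h => by simp [h] at hx
  rw [Complex.cpow_def_of_ne_zero hx0, Complex.exp_im]
  have harg : (Complex.log x * ((1:ℂ)/2)).im = x.arg / 2 := by
    simp [Complex.mul_im, Complex.log_im]
    ring
  rw [harg]
  apply mul_neg_of_pos_of_neg (Real.exp_pos _)
  apply Real.sin_neg_of_neg_of_neg_pi_lt
  · have := Complex.arg_neg_iff.2 hx; linarith
  · have := Complex.neg_pi_lt_arg x; have := Real.pi_pos; linarith

lemma im_ttz (t : ℝ) (z : ℂ) : ((t:ℂ)^2 - 4*z).im = -4 * z.im := by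
  simp [Complex.sub_im, Complex.mul_im, sq, Complex.ofReal_im, Complex.ofReal_re]

lemma Fsub_im_lt (s t : ℝ) (hst : s < t) (z : ℂ) (hz : 0 < z.im) :
    z.im < (Fsub s t z).im := by
  have him : ((t:ℂ)^2 - 4*z).im < 0 := by rw [im_ttz]; linarith
  have h : (t:ℂ)^2 - 4*z ≠ 0 := fun h0 => by rw [h0] at him; simp at him
  have hw := im_cpow_half_neg him
  rw [Fsub_eq s t z h]
  simp only [Complex.sub_im, Complex.mul_im, Complex.add_im, Complex.ofReal_im,
    Complex.ofReal_re]
  nlinarith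

theorem stmt13 (s t : ℝ) (hs : 0 < s) (hst : s < t) :
    (∀ z : ℂ, 0 < z.im → 0 < (Fsub s t z).im) ∧
    (∀ z : ℂ, z.im ≠ 0 → Fsub s t (starRingEnd ℂ z) = starRingEnd ℂ (Fsub s t z)) ∧
    (∀ z : ℂ, 0 < z.im → z.im ≤ (Fsub s t z).im) ∧
    Filter.Tendsto (fun y : ℝ => Fsub s t (y * Complex.I) / (y * Complex.I))
      Filter.atTop (nhds 1) := by
  refine ⟨fun z hz => lt_trans hz (Fsub_im_lt s t hst z hz), ?_,
    fun z hz => (Fsub_im_lt s t hst z hz).le, ?_⟩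
  · intro z hz
    have harg : ((t:ℂ)^2 - 4*z).arg ≠ Real.pi := by
      intro h
      obtain ⟨-, h⟩ := Complex.arg_eq_pi_iff.1 h
      rw [im_ttz] at h
      exact hz (by linarith)
    have key : ((t:ℂ)^2 - 4*(starRingEnd ℂ z)) ^ ((1:ℂ)/2)
        = starRingEnd ℂ (((t:ℂ)^2 - 4*z) ^ ((1:ℂ)/2)) := by
      have h2 := Complex.conj_cpow ((t:ℂ)^2 - 4*z) ((1:ℂ)/2) harg
      have hc : starRingEnd ℂ ((1:ℂ)/2) = (1:ℂ)/2 := by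
        rw [show ((1:ℂ)/2) = ((1/2:ℝ):ℂ) by norm_num, Complex.conj_ofReal]
      rw [hc] at h2
      rw [← h2]
      congr 1
      simp [map_sub, map_mul, map_pow, map_ofNat, Complex.conj_ofReal]
    unfold Fsub
    rw [key]
    simp [map_mul, map_sub, map_add, map_pow, map_ofNat, map_one, map_div₀,
      Complex.conj_ofReal]
  · -- limit
    set c : ℂ := (((t - s)/2 : ℝ) : ℂ) with hc
    set g : ℝ → ℂ := fun y => (((t:ℂ)^2 - 4*(y*Complex.I)) ^ ((1:ℂ)/2) + t) / (y * Complex.I)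
      with hg
    have hgten : Filter.Tendsto g Filter.atTop (nhds 0) := by
      rw [tendsto_zero_iff_norm_tendsto_zero]
      apply squeeze_zero' (Filter.Eventually.of_forall fun y => norm_nonneg _)
        (g := fun y => Real.sqrt ((t^2 + 4*y)/y^2) + |t|/y)
      · filter_upwards [Filter.eventually_gt_atTop 0] with y hy
        have hyI : (y : ℂ) * Complex.I ≠ 0 := by
          simp [Complex.ext_iff, hy.ne']
        have h1 : ‖g y‖ = Norm.norm (((t:ℂ)^2 - 4*(y*Complex.I)) ^ ((1:ℂ)/2) + t) / y := by
          rw [hg]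
          simp only [norm_div]
          congr 1
          simp [Complex.norm_def, Complex.normSq_mul, abs_of_pos hy,
            Real.sqrt_mul_self hy.le]
        rw [h1]
        have habs : ‖(t:ℂ)^2 - 4*(y*Complex.I)‖ ≤ t^2 + 4*y := by
          refine (norm_sub_le _ _).trans ?_
          have : ‖(t:ℂ)^2‖ = t^2 := by
            rw [norm_pow, Complex.norm_real, Real.norm_eq_abs, sq_abs]
          rw [this]
          have : ‖4*((y:ℂ)*Complex.I)‖ = 4*y := by
            simp [map_mul, Complex.norm_real, abs_of_pos hy]
          rw [this]
        have hw : ‖((t:ℂ)^2 - 4*(y*Complex.I)) ^ ((1:ℂ)/2)‖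
            ≤ Real.sqrt (t^2 + 4*y) := by
          refine (Complex.norm_cpow_le _ _).trans ?_
          simp only [Complex.div_re, Complex.div_im, Complex.one_re, Complex.one_im]
          norm_num
          rw [Real.sqrt_eq_rpow]
          exact Real.rpow_le_rpow (norm_nonneg _) habs (by norm_num)
        have hsq : Real.sqrt ((t^2 + 4*y)/y^2) = Real.sqrt (t^2 + 4*y) / y := by
          rw [Real.sqrt_div (by positivity), Real.sqrt_sq hy.le]
        rw [hsq, ← add_div]
        gcongr
        calc ‖((t:ℂ)^2 - 4*((y:ℂ)*Complex.I)) ^ ((1:ℂ)/2) + (t:ℂ)‖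
            ≤ ‖((t:ℂ)^2 - 4*((y:ℂ)*Complex.I)) ^ ((1:ℂ)/2)‖
              + ‖((t:ℂ))‖ := norm_add_le _ _
          _ ≤ Real.sqrt (t^2 + 4*y) + |t| := by
              rw [Complex.norm_real, Real.norm_eq_abs]
              exact add_le_add_left hw _
      · have h2 : Filter.Tendsto (fun y : ℝ => (t^2 + 4*y)/y^2) Filter.atTop (nhds 0) := by
          have ha : Filter.Tendsto (fun y : ℝ => t^2/y^2 + 4/y) Filter.atTop (nhds 0) := by
            have hb := Filter.Tendsto.div_atTop (f := fun _ : ℝ => t^2)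
              (tendsto_const_nhds) (Filter.tendsto_pow_atTop (two_ne_zero))
            have hcc := Filter.Tendsto.div_atTop (f := fun _ : ℝ => (4:ℝ))
              (tendsto_const_nhds) Filter.tendsto_id
            simpa using hb.add hcc
          refine ha.congr' ?_
          filter_upwards [Filter.eventually_gt_atTop 0] with y hy
          field_simp
        have h3 : Filter.Tendsto (fun y : ℝ => Real.sqrt ((t^2 + 4*y)/y^2))
            Filter.atTop (nhds 0) := by
          have := (Real.continuous_sqrt.tendsto 0).comp h2
          simpa [Function.comp_def] using this
        have h4 : Filter.Tendsto (fun y : ℝ => |t|/y) Filter.atTop (nhds 0) :=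
          Filter.Tendsto.div_atTop tendsto_const_nhds Filter.tendsto_id
        simpa using h3.add h4
    have hfin : Filter.Tendsto (fun y : ℝ => 1 - c * g y) Filter.atTop (nhds 1) := by
      have h5 := (tendsto_const_nhds (α := ℝ) (f := Filter.atTop) (x := (1:ℂ))).sub
        ((tendsto_const_nhds (α := ℝ) (f := Filter.atTop) (x := c)).mul hgten)
      simpa using h5
    refine hfin.congr' ?_
    filter_upwards [Filter.eventually_gt_atTop 0] with y hy
    have hne : (t:ℂ)^2 - 4*((y:ℂ)*Complex.I) ≠ 0 := by
      intro h0
      have := congrArg Complex.im h0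
      rw [im_ttz] at this
      simp at this
      · exact hy.ne' this
    have hyI : (y : ℂ) * Complex.I ≠ 0 := by
      simp [Complex.ext_iff, hy.ne']
    rw [Fsub_eq s t _ hne, hg, hc]
    have hy0 : (y:ℂ) ≠ 0 := by exact_mod_cast hy.ne'
    field_simp
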